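/- Let Λ be a finite-rank lattice, Z: Λ ⊗ ℝ → ℂ a real-linear map, and S ⊆ Λ \ {0} a subset with Z(v) ≠ 0 for all v ∈ S. Fix any norm ‖·‖ on Λ ⊗ ℝ. Then the following are equivalent: (1) there exists M > 0 such that ‖v‖ ≤ M·|Z(v)| for all v ∈ S; (2) there exists a quadratic form Q on Λ ⊗ ℝ such that Q is negative definite on ker(Z) and Q(v) ≥ 0 for all v ∈ S. -/

import Mathlib

open scoped RealInnerProductSpace

lemma quad_cont {V : Type*} [NormedAddCommGroup V] [NormedSpace ℝ V]
    [FiniteDimensional ℝ V] (Q : QuadraticForm ℝ V) : Continuous Q := by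
  let B := QuadraticMap.associatedHom ℝ Q
  have hB : ∀ x, Q x = B x x := fun x => (QuadraticMap.associated_eq_self_apply ℝ Q x).symm
  have : Continuous fun x : V => B x x := by
    have h1 : Continuous fun x : V =>
        (LinearMap.toContinuousLinearMap (B x) : V →L[ℝ] ℝ) :=
      (LinearMap.toContinuousLinearMap.toLinearMap.comp
        (B : V →ₗ[ℝ] V →ₗ[ℝ] ℝ)).continuous_of_finiteDimensional
    exact isBoundedBilinearMap_apply.continuous.comp (h1.prodMk continuous_id)
  exact this.congr fun x => (hB x).symm

/-- Equivalence of the two formulations of the support property for a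
finite-rank lattice `Λ` with `Λ ⊗ ℝ` realized as a finite-dimensional real
normed space `V` via `ι`. -/
theorem stmt13 (Λ : Type*) [AddCommGroup Λ] [Module.Free ℤ Λ] [Module.Finite ℤ Λ]
    (V : Type*) [NormedAddCommGroup V] [NormedSpace ℝ V] [FiniteDimensional ℝ V]
    (ι : Λ →+ V) (hspan : Submodule.span ℝ (Set.range ι) = ⊤)
    (Z : V →ₗ[ℝ] ℂ) (S : Set Λ) (hS0 : (0 : Λ) ∉ S)
    (hSZ : ∀ v ∈ S, Z (ι v) ≠ 0) :
    (∃ M > 0, ∀ v ∈ S, ‖ι v‖ ≤ M * ‖Z (ι v)‖) ↔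
      (∃ Q : QuadraticForm ℝ V,
        (∀ w ∈ LinearMap.ker Z, w ≠ 0 → Q w < 0) ∧ ∀ v ∈ S, 0 ≤ Q (ι v)) := by
  constructor
  · rintro ⟨M, hM, hbound⟩
    -- build an auxiliary linear equivalence to Euclidean space
    let n := Module.finrank ℝ V
    let e : V ≃ₗ[ℝ] EuclideanSpace ℝ (Fin n) :=
      (Module.finBasis ℝ V).equivFun ≪≫ₗ (WithLp.linearEquiv 2 ℝ (Fin n → ℝ)).symm
    obtain ⟨C, hC0, hCe⟩ : ∃ C > 0, ∀ w : V, ‖e w‖ ≤ C * ‖w‖ := by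
      refine ⟨‖LinearMap.toContinuousLinearMap e.toLinearMap‖ + 1, by positivity, fun w => ?_⟩
      calc ‖e w‖ = ‖LinearMap.toContinuousLinearMap e.toLinearMap w‖ := rfl
        _ ≤ ‖LinearMap.toContinuousLinearMap e.toLinearMap‖ * ‖w‖ :=
            (LinearMap.toContinuousLinearMap e.toLinearMap).le_opNorm w
        _ ≤ _ := by nlinarith [norm_nonneg w,
            norm_nonneg (LinearMap.toContinuousLinearMap e.toLinearMap)]
    let QZ : QuadraticForm ℝ V :=
      (LinearMap.BilinMap.toQuadraticMap (innerₗ ℂ)).comp Z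
    let q : QuadraticForm ℝ V :=
      (LinearMap.BilinMap.toQuadraticMap
        (innerₗ (EuclideanSpace ℝ (Fin n)))).comp e.toLinearMap
    have hQZ : ∀ w, QZ w = ‖Z w‖ ^ 2 := by
      intro w
      simp only [QZ, QuadraticMap.comp_apply, LinearMap.BilinMap.toQuadraticMap_apply,
        innerₗ_apply_apply]
      rw [real_inner_self_eq_norm_sq]
    have hq : ∀ w, q w = ‖e w‖ ^ 2 := by
      intro w
      simp only [q, QuadraticMap.comp_apply, LinearMap.BilinMap.toQuadraticMap_apply,
        innerₗ_apply_apply]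
      rw [real_inner_self_eq_norm_sq]; rfl
    refine ⟨(C ^ 2 * M ^ 2) • QZ - q, ?_, ?_⟩
    · intro w hw hw0
      have hZw : Z w = 0 := hw
      have hew : e w ≠ 0 := fun h => hw0 (by
        have := congrArg e.symm h; simpa using this)
      have hqw : 0 < q w := by rw [hq]; exact pow_pos (norm_pos_iff.2 hew) 2
      simp only [QuadraticMap.sub_apply, QuadraticMap.smul_apply, hQZ, hZw,
        smul_eq_mul, norm_zero]
      nlinarith
    · intro v hv
      have h1 : ‖ι v‖ ≤ M * ‖Z (ι v)‖ := hbound v hv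
      have h2 : ‖e (ι v)‖ ≤ C * ‖ι v‖ := hCe (ι v)
      simp only [QuadraticMap.sub_apply, QuadraticMap.smul_apply, hQZ, hq, smul_eq_mul]
      nlinarith [mul_self_le_mul_self (norm_nonneg (e (ι v))) h2,
        mul_self_le_mul_self (norm_nonneg (ι v)) h1, sq_nonneg C, sq_nonneg M,
        norm_nonneg (ι v), norm_nonneg (e (ι v)), norm_nonneg (Z (ι v)),
        hC0.le, hM.le]
  · rintro ⟨Q, hker, hQS⟩
    have hZc : Continuous Z := Z.continuous_of_finiteDimensional
    set K : Set V := {w : V | ‖w‖ = 1 ∧ 0 ≤ Q w} with hKdef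
    have hKclosed : IsClosed K :=
      (isClosed_eq continuous_norm continuous_const).inter
        (isClosed_le continuous_const (quad_cont Q))
    have hKcompact : IsCompact K := by
      apply Metric.isCompact_of_isClosed_isBounded hKclosed
      exact (Metric.isBounded_iff_subset_closedBall 0).2
        ⟨1, fun w hw => by simp [Metric.mem_closedBall, hw.1.le, dist_eq_norm, hw.1]⟩
    have hKpos : ∃ ε > 0, ∀ w ∈ K, ε ≤ ‖Z w‖ := by
      rcases K.eq_empty_or_nonempty with hKe | hKne
      · exact ⟨1, one_pos, fun w hw => absurd (hKe ▸ hw) (Set.notMem_empty w)⟩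
      · obtain ⟨w₀, hw₀K, hw₀min⟩ := hKcompact.exists_isMinOn hKne
          ((continuous_norm.comp hZc).continuousOn)
        refine ⟨‖Z w₀‖, ?_, fun w hw => hw₀min hw⟩
        rcases eq_or_ne (Z w₀) 0 with h | h
        · exfalso
          have hw0 : w₀ ≠ 0 := by
            intro h0; rw [h0] at hw₀K; simp [hKdef] at hw₀K
          exact absurd hw₀K.2 (not_le.2 (hker w₀ h hw0))
        · exact norm_pos_iff.mpr h
    obtain ⟨ε, hε, hεK⟩ := hKpos
    refine ⟨ε⁻¹, by positivity, fun v hv => ?_⟩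
    set w := ι v with hw
    have hZw : Z w ≠ 0 := hSZ v hv
    have hw0 : w ≠ 0 := fun h => hZw (by rw [h, map_zero])
    have hnw : ‖w‖ ≠ 0 := norm_ne_zero_iff.2 hw0
    have hnwpos : 0 < ‖w‖ := norm_pos_iff.2 hw0
    set u := ‖w‖⁻¹ • w with hu
    have huK : u ∈ K := by
      constructor
      · rw [hu, norm_smul, norm_inv, norm_norm, inv_mul_cancel₀ hnw]
      · rw [hu, QuadraticMap.map_smul]
        have := hQS v hv
        have h2 : (0:ℝ) ≤ ‖w‖⁻¹ * ‖w‖⁻¹ := by positivity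
        simpa [smul_eq_mul] using mul_nonneg h2 this
    have hZu : ‖Z u‖ = ‖w‖⁻¹ * ‖Z w‖ := by
      rw [hu, map_smul, norm_smul]
      simp [abs_of_nonneg (inv_nonneg.2 (norm_nonneg w))]
    have h3 : ε ≤ ‖w‖⁻¹ * ‖Z w‖ := hZu ▸ hεK u huK
    have h4 : ε * ‖w‖ ≤ ‖Z w‖ := by
      calc ε * ‖w‖ ≤ (‖w‖⁻¹ * ‖Z w‖) * ‖w‖ := by nlinarith
        _ = ‖Z w‖ := by field_simp
    calc ‖ι v‖ = ε⁻¹ * (ε * ‖w‖) := by field_simp; rfl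
      _ ≤ ε⁻¹ * ‖Z w‖ := by
          exact mul_le_mul_of_nonneg_left h4 (by positivity)
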